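/- Fix α ∈ ℝ. For each pair (s₁, s₂) ∈ {0,1}² there exists a complex number c with |c| = 1, depending only on α, s₁, s₂ (in particular c = e^{iα/2} when s₁ = s₂ = 0), such that for every vector ψ ∈ ℂ²: X^{s₂} · Z^{s₁} · (⟨b₂| ⊗ I₂) · (⟨b₁| ⊗ I₂ ⊗ I₂) · (I₂ ⊗ CZ) · (CZ ⊗ I₂) · (ψ ⊗ |+_{π/4}⟩ ⊗ |+⟩) = (c/2) · H · Z(α) · H · ψ, where b₁ = |+_0⟩ if s₁ = 0 and |-_0⟩ if s₁ = 1, b₂ = |+_θ⟩ if s₂ = 0 and |-_θ⟩ if s₂ = 1 with θ := -(-1)^{s₁}·α + π/4, and (⟨b|⊗I) denotes the partial inner product pairing the bra with the indicated tensor factor. That is, the pattern 𝔛_α = X₃^{s₂} Z₃^{s₁} M₂^{-(-1)^{s₁}α+π/4} M₁^0 E₂₃ E₁₂ N₂^{π/4} N₃^0 deterministically implements the unitary H Z(α) H on the input qubit, for every combination of measurement outcomes. -/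

import Mathlib

noncomputable section

open Matrix
open scoped Kronecker

/-- Pauli X matrix. -/
def X : Matrix (Fin 2) (Fin 2) ℂ := !![0, 1; 1, 0]

/-- Pauli Z matrix. -/
def Z : Matrix (Fin 2) (Fin 2) ℂ := !![1, 0; 0, -1]

/-- Hadamard gate. -/
def H : Matrix (Fin 2) (Fin 2) ℂ := (Real.sqrt 2 : ℂ)⁻¹ • !![1, 1; 1, -1]

/-- Phase rotation `Z(α) = diag(e^{-iα/2}, e^{iα/2})`. -/
def Zrot (α : ℝ) : Matrix (Fin 2) (Fin 2) ℂ :=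
  !![Complex.exp (-((α : ℂ) / 2) * Complex.I), 0;
     0, Complex.exp (((α : ℂ) / 2) * Complex.I)]

/-- `|+_α⟩ = (|0⟩ + e^{iα}|1⟩)/√2` as a column vector. -/
def ketPlus (α : ℝ) : Matrix (Fin 2) (Fin 1) ℂ :=
  (Real.sqrt 2 : ℂ)⁻¹ • !![1; Complex.exp ((α : ℂ) * Complex.I)]

/-- `|-_α⟩ = (|0⟩ - e^{iα}|1⟩)/√2` as a column vector. -/
def ketMinus (α : ℝ) : Matrix (Fin 2) (Fin 1) ℂ :=
  (Real.sqrt 2 : ℂ)⁻¹ • !![1; -Complex.exp ((α : ℂ) * Complex.I)]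

/-- The controlled-Z gate `diag(1,1,1,-1)` on ℂ²⊗ℂ² (Kronecker ordering). -/
def CZ : Matrix (Fin 2 × Fin 2) (Fin 2 × Fin 2) ℂ :=
  Matrix.diagonal fun p => if p = (1, 1) then -1 else 1

/-- `X^s`: the identity if `s = 0`, Pauli `X` if `s = 1`. -/
def Xpow (s : Fin 2) : Matrix (Fin 2) (Fin 2) ℂ := if s = 0 then 1 else X

/-- `Z^s`: the identity if `s = 0`, Pauli `Z` if `s = 1`. -/
def Zpow (s : Fin 2) : Matrix (Fin 2) (Fin 2) ℂ := if s = 0 then 1 else Z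

/-- `I₂ ⊗ CZ` as an operator on three qubits indexed by `(Fin 2 × Fin 2) × Fin 2`. -/
def idKronCZ : Matrix ((Fin 2 × Fin 2) × Fin 2) ((Fin 2 × Fin 2) × Fin 2) ℂ :=
  Matrix.reindex (Equiv.prodAssoc (Fin 2) (Fin 2) (Fin 2)).symm
    (Equiv.prodAssoc (Fin 2) (Fin 2) (Fin 2)).symm
    ((1 : Matrix (Fin 2) (Fin 2) ℂ) ⊗ₖ CZ)

set_option maxHeartbeats 4000000 in
/-- The pattern `𝔛_α = X₃^{s₂} Z₃^{s₁} M₂^{-(-1)^{s₁}α+π/4} M₁^0 E₂₃ E₁₂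
N₂^{π/4} N₃^0` deterministically implements `H Z(α) H` on the input qubit: for
each outcome pair `(s₁, s₂)` there is a unimodular constant `c` depending only on
`α, s₁, s₂` (with `c = e^{iα/2}` for `s₁ = s₂ = 0`) such that for all `ψ`,
`X^{s₂} Z^{s₁} (⟨b₂|⊗I₂) (⟨b₁|⊗I₂⊗I₂) (I₂⊗CZ) (CZ⊗I₂) (ψ⊗|+_{π/4}⟩⊗|+⟩)
  = (c/2) H Z(α) H ψ`,
where `b₁ = |±_0⟩` according to `s₁` and `b₂ = |±_θ⟩` according to `s₂`, with
`θ = -(-1)^{s₁}α + π/4`. -/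
theorem X_pattern (α : ℝ) (s₁ s₂ : Fin 2) :
    ∃ c : ℂ, ‖c‖ = 1 ∧
      (s₁ = 0 → s₂ = 0 → c = Complex.exp (((α : ℂ) / 2) * Complex.I)) ∧
      ∀ ψ : Matrix (Fin 2) (Fin 1) ℂ,
        ((1 : Matrix (Fin 1 × Fin 1) (Fin 1 × Fin 1) ℂ) ⊗ₖ Xpow s₂) *
          ((1 : Matrix (Fin 1 × Fin 1) (Fin 1 × Fin 1) ℂ) ⊗ₖ Zpow s₁) *
          (((1 : Matrix (Fin 1) (Fin 1) ℂ) ⊗ₖ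
              (if s₂ = 0 then ketPlus (-(-1 : ℝ) ^ (s₁ : ℕ) * α + Real.pi / 4)
               else ketMinus (-(-1 : ℝ) ^ (s₁ : ℕ) * α + Real.pi / 4))ᴴ) ⊗ₖ
            (1 : Matrix (Fin 2) (Fin 2) ℂ)) *
          (((if s₁ = 0 then ketPlus 0 else ketMinus 0)ᴴ ⊗ₖ
              (1 : Matrix (Fin 2) (Fin 2) ℂ)) ⊗ₖ (1 : Matrix (Fin 2) (Fin 2) ℂ)) *
          idKronCZ * (CZ ⊗ₖ (1 : Matrix (Fin 2) (Fin 2) ℂ)) *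
          ((ψ ⊗ₖ ketPlus (Real.pi / 4)) ⊗ₖ ketPlus 0)
        = (c / 2) •
            ((1 : Matrix (Fin 1 × Fin 1) (Fin 1 × Fin 1) ℂ) ⊗ₖ
              (H * Zrot α * H * ψ)) := by
  have h2 : (((Real.sqrt 2 : ℝ):ℂ))⁻¹^2 = 2⁻¹ := by
    rw [inv_pow]; norm_cast; rw [Real.sq_sqrt (by norm_num)]; norm_num
  have h4 : (((Real.sqrt 2 : ℝ):ℂ))⁻¹^4 = 4⁻¹ := by
    rw [show (4:ℕ) = 2*2 from rfl, pow_mul, h2]; norm_num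
  have hE : Complex.exp ((α:ℂ)/2*Complex.I) ≠ 0 := Complex.exp_ne_zero _
  have hP : Complex.exp ((Real.pi:ℂ)/4*Complex.I) ≠ 0 := Complex.exp_ne_zero _
  fin_cases s₁ <;> fin_cases s₂
  · refine ⟨Complex.exp (((α : ℂ) / 2) * Complex.I), by simp [Complex.norm_exp], fun _ _ => rfl,
      fun ψ => ?_⟩
    ext ⟨⟨i,j⟩,k⟩ ⟨⟨i',j'⟩,l⟩
    fin_cases i; fin_cases j; fin_cases i'; fin_cases j'
    fin_cases k <;> fin_cases l
    all_goals
      simp [Matrix.mul_apply, Fintype.sum_prod_type, Fin.sum_univ_succ, idKronCZ, CZ, X, Z, H,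
        Zrot, ketPlus, ketMinus, Xpow, Zpow, Matrix.one_apply, Matrix.diagonal_apply,
        Prod.ext_iff, Matrix.vecMul, dotProduct, ← Complex.exp_conj, _root_.map_mul, map_add,
        map_inv₀, Complex.conj_I, Complex.conj_ofReal, map_div₀, map_ofNat]
      rw [show (-((-(α:ℂ) + ↑Real.pi/4)*Complex.I)) = (↑α/2*Complex.I + ↑α/2*Complex.I) + -(↑Real.pi/4*Complex.I) by ring]
      simp only [Complex.exp_add, Complex.exp_neg, show (-((α:ℂ)/2*Complex.I)) = -(↑α/2*Complex.I) from rfl]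
      generalize Complex.exp ((α:ℂ)/2*Complex.I) = E at hE ⊢
      generalize Complex.exp ((Real.pi:ℂ)/4*Complex.I) = P at hP ⊢
      have ce1 : ∀ x y : ℂ, x * E * y * E⁻¹ = x * y := fun x y => by
        rw [mul_right_comm, mul_inv_cancel_right₀ hE]
      have ce2 : ∀ x y : ℂ, x * E⁻¹ * y * E = x * y := fun x y => by
        rw [mul_right_comm, inv_mul_cancel_right₀ hE]
      have cp1 : ∀ x y : ℂ, x * P * y * P⁻¹ = x * y := fun x y => by
        rw [mul_right_comm, mul_inv_cancel_right₀ hP]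
      have cp2 : ∀ x y : ℂ, x * P⁻¹ * y * P = x * y := fun x y => by
        rw [mul_right_comm, inv_mul_cancel_right₀ hP]
      ring_nf
      try simp only [h2, h4, mul_inv_cancel_right₀ hE, mul_inv_cancel_right₀ hP,
        inv_mul_cancel_right₀ hE, inv_mul_cancel_right₀ hP, ce1, ce2, cp1, cp2]
      try ring
  · refine ⟨Complex.exp (((α : ℂ) / 2) * Complex.I), by simp [Complex.norm_exp],
      fun _ h => absurd h (by decide), fun ψ => ?_⟩
    ext ⟨⟨i,j⟩,k⟩ ⟨⟨i',j'⟩,l⟩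
    fin_cases i; fin_cases j; fin_cases i'; fin_cases j'
    fin_cases k <;> fin_cases l
    all_goals
      simp [Matrix.mul_apply, Fintype.sum_prod_type, Fin.sum_univ_succ, idKronCZ, CZ, X, Z, H,
        Zrot, ketPlus, ketMinus, Xpow, Zpow, Matrix.one_apply, Matrix.diagonal_apply,
        Prod.ext_iff, Matrix.vecMul, dotProduct, ← Complex.exp_conj, _root_.map_mul, map_add,
        map_inv₀, Complex.conj_I, Complex.conj_ofReal, map_div₀, map_ofNat]
      rw [show (-((-(α:ℂ) + ↑Real.pi/4)*Complex.I)) = (↑α/2*Complex.I + ↑α/2*Complex.I) + -(↑Real.pi/4*Complex.I) by ring]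
      simp only [Complex.exp_add, Complex.exp_neg, show (-((α:ℂ)/2*Complex.I)) = -(↑α/2*Complex.I) from rfl]
      generalize Complex.exp ((α:ℂ)/2*Complex.I) = E at hE ⊢
      generalize Complex.exp ((Real.pi:ℂ)/4*Complex.I) = P at hP ⊢
      have ce1 : ∀ x y : ℂ, x * E * y * E⁻¹ = x * y := fun x y => by
        rw [mul_right_comm, mul_inv_cancel_right₀ hE]
      have ce2 : ∀ x y : ℂ, x * E⁻¹ * y * E = x * y := fun x y => by
        rw [mul_right_comm, inv_mul_cancel_right₀ hE]
      have cp1 : ∀ x y : ℂ, x * P * y * P⁻¹ = x * y := fun x y => by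
        rw [mul_right_comm, mul_inv_cancel_right₀ hP]
      have cp2 : ∀ x y : ℂ, x * P⁻¹ * y * P = x * y := fun x y => by
        rw [mul_right_comm, inv_mul_cancel_right₀ hP]
      ring_nf
      try simp only [h2, h4, mul_inv_cancel_right₀ hE, mul_inv_cancel_right₀ hP,
        inv_mul_cancel_right₀ hE, inv_mul_cancel_right₀ hP, ce1, ce2, cp1, cp2]
      try ring
  · refine ⟨Complex.exp (-((α : ℂ) / 2) * Complex.I), by simp [Complex.norm_exp],
      fun h => absurd h (by decide), fun ψ => ?_⟩
    ext ⟨⟨i,j⟩,k⟩ ⟨⟨i',j'⟩,l⟩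
    fin_cases i; fin_cases j; fin_cases i'; fin_cases j'
    fin_cases k <;> fin_cases l
    all_goals
      simp [Matrix.mul_apply, Fintype.sum_prod_type, Fin.sum_univ_succ, idKronCZ, CZ, X, Z, H,
        Zrot, ketPlus, ketMinus, Xpow, Zpow, Matrix.one_apply, Matrix.diagonal_apply,
        Prod.ext_iff, Matrix.vecMul, dotProduct, ← Complex.exp_conj, _root_.map_mul, map_add,
        map_inv₀, Complex.conj_I, Complex.conj_ofReal, map_div₀, map_ofNat]
      rw [show (-(((α:ℂ) + ↑Real.pi/4)*Complex.I)) = (-(↑α/2*Complex.I) + -(↑α/2*Complex.I)) + -(↑Real.pi/4*Complex.I) by ring]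
      simp only [Complex.exp_add, Complex.exp_neg, show (-((α:ℂ)/2*Complex.I)) = -(↑α/2*Complex.I) from rfl]
      generalize Complex.exp ((α:ℂ)/2*Complex.I) = E at hE ⊢
      generalize Complex.exp ((Real.pi:ℂ)/4*Complex.I) = P at hP ⊢
      have ce1 : ∀ x y : ℂ, x * E * y * E⁻¹ = x * y := fun x y => by
        rw [mul_right_comm, mul_inv_cancel_right₀ hE]
      have ce2 : ∀ x y : ℂ, x * E⁻¹ * y * E = x * y := fun x y => by
        rw [mul_right_comm, inv_mul_cancel_right₀ hE]
      have cp1 : ∀ x y : ℂ, x * P * y * P⁻¹ = x * y := fun x y => by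
        rw [mul_right_comm, mul_inv_cancel_right₀ hP]
      have cp2 : ∀ x y : ℂ, x * P⁻¹ * y * P = x * y := fun x y => by
        rw [mul_right_comm, inv_mul_cancel_right₀ hP]
      ring_nf
      try simp only [h2, h4, mul_inv_cancel_right₀ hE, mul_inv_cancel_right₀ hP,
        inv_mul_cancel_right₀ hE, inv_mul_cancel_right₀ hP, ce1, ce2, cp1, cp2]
      try ring
  · refine ⟨-Complex.exp (-((α : ℂ) / 2) * Complex.I), by simp [Complex.norm_exp],
      fun h => absurd h (by decide), fun ψ => ?_⟩
    ext ⟨⟨i,j⟩,k⟩ ⟨⟨i',j'⟩,l⟩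
    fin_cases i; fin_cases j; fin_cases i'; fin_cases j'
    fin_cases k <;> fin_cases l
    all_goals
      simp [Matrix.mul_apply, Fintype.sum_prod_type, Fin.sum_univ_succ, idKronCZ, CZ, X, Z, H,
        Zrot, ketPlus, ketMinus, Xpow, Zpow, Matrix.one_apply, Matrix.diagonal_apply,
        Prod.ext_iff, Matrix.vecMul, dotProduct, ← Complex.exp_conj, _root_.map_mul, map_add,
        map_inv₀, Complex.conj_I, Complex.conj_ofReal, map_div₀, map_ofNat]
      rw [show (-(((α:ℂ) + ↑Real.pi/4)*Complex.I)) = (-(↑α/2*Complex.I) + -(↑α/2*Complex.I)) + -(↑Real.pi/4*Complex.I) by ring]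
      simp only [Complex.exp_add, Complex.exp_neg, show (-((α:ℂ)/2*Complex.I)) = -(↑α/2*Complex.I) from rfl]
      generalize Complex.exp ((α:ℂ)/2*Complex.I) = E at hE ⊢
      generalize Complex.exp ((Real.pi:ℂ)/4*Complex.I) = P at hP ⊢
      have ce1 : ∀ x y : ℂ, x * E * y * E⁻¹ = x * y := fun x y => by
        rw [mul_right_comm, mul_inv_cancel_right₀ hE]
      have ce2 : ∀ x y : ℂ, x * E⁻¹ * y * E = x * y := fun x y => by
        rw [mul_right_comm, inv_mul_cancel_right₀ hE]
      have cp1 : ∀ x y : ℂ, x * P * y * P⁻¹ = x * y := fun x y => by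
        rw [mul_right_comm, mul_inv_cancel_right₀ hP]
      have cp2 : ∀ x y : ℂ, x * P⁻¹ * y * P = x * y := fun x y => by
        rw [mul_right_comm, inv_mul_cancel_right₀ hP]
      ring_nf
      try simp only [h2, h4, mul_inv_cancel_right₀ hE, mul_inv_cancel_right₀ hP,
        inv_mul_cancel_right₀ hE, inv_mul_cancel_right₀ hP, ce1, ce2, cp1, cp2]
      try ring
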